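/- A point ρ = 1/2 + iτ with τ real is a zero of the Riemann zeta function if and only if Re ∫_0^1 t^{ρ-2} ψ(1/t²) dt = 1/(4|ρ|²), where ψ(x) = ∑_{n=1}^∞ e^{-π n² x}. -/

import Mathlib

open Complex MeasureTheory Set

noncomputable def psi (x : ℝ) : ℝ := ∑' n : ℕ+, Real.exp (-Real.pi * n ^ 2 * x)

lemma hasSum_psi {x : ℝ} (hx : 0 < x) :
    HasSum (fun n : ℕ+ => Real.exp (-Real.pi * n ^ 2 * x))
      ((HurwitzZeta.evenKernel 0 x - 1) / 2) := by
  have h := HurwitzZeta.hasSum_int_evenKernel₀ (0 : ℝ) hx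
  simp only [add_zero, Int.cast_eq_zero] at h
  have h2 := h.nat_add_neg
  have e1 : ∀ n : ℕ, ((if (n : ℤ) = 0 then 0 else Real.exp (-Real.pi * (n : ℤ) ^ 2 * x)) +
      (if (-n : ℤ) = 0 then 0 else Real.exp (-Real.pi * (-n : ℤ) ^ 2 * x))) =
      (if n = 0 then 0 else 2 * Real.exp (-Real.pi * n ^ 2 * x)) := by
    intro n
    rcases eq_or_ne n 0 with rfl | hn
    · simp
    · rw [if_neg (by exact_mod_cast hn), if_neg (by simpa using hn), if_neg hn]
      push_cast
      ring_nf
  rw [funext e1] at h2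
  have hcoe : ((0:ℝ) : UnitAddCircle) = 0 := by norm_num
  rw [hcoe, if_pos rfl, if_pos rfl, add_zero] at h2
  have h3 : HasSum (fun p : ℕ+ => 2 * Real.exp (-Real.pi * p ^ 2 * x))
      (HurwitzZeta.evenKernel 0 x - 1) := by
    have hinj : Function.Injective (fun p : ℕ+ => (p : ℕ)) :=
      fun a b hab => PNat.coe_injective hab
    have hsupp : ∀ n ∉ Set.range (fun p : ℕ+ => (p : ℕ)),
        (if n = 0 then 0 else 2 * Real.exp (-Real.pi * n ^ 2 * x)) = 0 := by
      intro n hn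
      have : n = 0 := by
        by_contra h0
        exact hn ⟨⟨n, Nat.pos_of_ne_zero h0⟩, rfl⟩
      simp [this]
    have h4 := (hinj.hasSum_iff hsupp).mpr h2
    refine h4.congr_fun fun p => ?_
    simp [Function.comp, p.2.ne']
  have := h3.div_const 2
  convert this using 2 with p
  · rfl
  · ring

lemma evenKernel_zero_eq {x : ℝ} (hx : 0 < x) :
    HurwitzZeta.evenKernel 0 x = 1 + 2 * psi x := by
  have := (hasSum_psi hx).tsum_eq
  rw [psi, this]; ring

theorem zeta_zero_iff (τ : ℝ) :
    riemannZeta (1 / 2 + I * τ) = 0 ↔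
      (∫ t in Ioo (0 : ℝ) 1, (t : ℂ) ^ ((1 / 2 + I * τ) - 2) * (psi (1 / t ^ 2) : ℝ)).re =
        1 / (4 * ‖(1 / 2 + I * τ : ℂ)‖ ^ 2) := by
  set ρ : ℂ := 1 / 2 + I * τ with hρdef
  have hρre : ρ.re = 1 / 2 := by simp [hρdef]
  have hρ0 : ρ ≠ 0 := fun h => by simp [h] at hρre
  have hρ1 : (1 : ℂ) - ρ ≠ 0 := fun h => by
    have : (1 - ρ).re = 0 := by rw [h]; rfl
    rw [sub_re, one_re, hρre] at this; norm_num at this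
  have hconjρ : (starRingEnd ℂ) ρ = 1 - ρ := by
    simp only [hρdef, map_add, map_mul, map_div₀, map_one, map_ofNat, Complex.conj_I,
      Complex.conj_ofReal]
    ring
  set φ : ℝ → ℂ := fun x => ((Set.indicator (Ioi (1:ℝ)) psi x : ℝ) : ℂ) with hφdef
  set M₁ : ℂ := mellin φ (ρ / 2) with hM1
  set M₂ : ℂ := mellin φ ((1 - ρ) / 2) with hM2
  -- Step 2 : M₂ = conj M₁
  have hφconj : ∀ x : ℝ, (starRingEnd ℂ) (φ x) = φ x := fun x => Complex.conj_ofReal _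
  have key2 : M₂ = (starRingEnd ℂ) M₁ := by
    rw [hM1, hM2, mellin, mellin, ← integral_conj]
    refine setIntegral_congr_fun measurableSet_Ioi fun x hx => ?_
    rw [smul_eq_mul, smul_eq_mul, map_mul, hφconj]
    congr 1
    have harg : (x : ℂ).arg ≠ Real.pi := by
      rw [Complex.arg_ofReal_of_nonneg (le_of_lt hx)]
      exact Real.pi_ne_zero.symm
    have := Complex.cpow_conj (x : ℂ) (ρ / 2 - 1) harg
    rw [Complex.conj_ofReal] at this
    rw [← this, map_sub, map_div₀, hconjρ, map_one, map_ofNat]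
  -- Step 3 : the target integral equals M₂ / 2
  have key3 : (∫ t in Ioo (0 : ℝ) 1, (t : ℂ) ^ (ρ - 2) * (psi (1 / t ^ 2) : ℝ)) = M₂ / 2 := by
    have h3a : (∫ t in Ioo (0 : ℝ) 1, (t : ℂ) ^ (ρ - 2) * (psi (1 / t ^ 2) : ℝ))
        = mellin (fun t => φ (t ^ (-2 : ℝ))) (ρ - 1) := by
      rw [mellin, ← integral_indicator measurableSet_Ioo, ← integral_indicator measurableSet_Ioi]
      congr 1
      funext t
      rcases le_or_gt t 0 with ht | ht
      · rw [indicator_of_notMem (by simp [ht] : t ∉ Ioo (0:ℝ) 1),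
          indicator_of_notMem (by simpa using ht)]
      rcases lt_or_ge t 1 with ht1 | ht1
      · rw [indicator_of_mem (mem_Ioo.mpr ⟨ht, ht1⟩), indicator_of_mem (mem_Ioi.mpr ht)]
        have hrp : t ^ (-2 : ℝ) = 1 / t ^ 2 := by
          rw [show (-2 : ℝ) = -(2:ℕ) by norm_num, Real.rpow_neg ht.le, Real.rpow_natCast, one_div]
        have hmem : (1:ℝ) / t ^ 2 ∈ Ioi (1:ℝ) := by
          rw [mem_Ioi, lt_div_iff₀ (by positivity), one_mul]
          nlinarith
        rw [hφdef]
        simp only [hrp, indicator_of_mem hmem, smul_eq_mul]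
        rw [show ρ - 1 - 1 = ρ - 2 by ring]
      · rw [indicator_of_notMem (by simp [ht1.not_gt] : t ∉ Ioo (0:ℝ) 1),
          indicator_of_mem (mem_Ioi.mpr ht)]
        have hrp : t ^ (-2 : ℝ) ∉ Ioi (1:ℝ) := by
          rw [mem_Ioi, not_lt, show (-2 : ℝ) = -(2:ℕ) by norm_num, Real.rpow_neg ht.le,
            Real.rpow_natCast]
          rw [inv_le_one_iff₀]
          right; nlinarith
        rw [hφdef]
        simp only [indicator_of_notMem hrp, ofReal_zero, smul_zero]
    rw [h3a, mellin_comp_rpow φ (ρ - 1) (-2)]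
    rw [show ((ρ - 1) / ((-2 : ℝ) : ℂ)) = (1 - ρ) / 2 by push_cast; ring]
    norm_num [smul_eq_mul]
    ring
  have hφ_mem : ∀ {x : ℝ}, 1 < x → φ x = ((psi x : ℝ) : ℂ) := fun {x} hx => by
    rw [hφdef]; simp only [indicator_of_mem (mem_Ioi.mpr hx)]
  have hφ_nmem : ∀ {x : ℝ}, x ≤ 1 → φ x = 0 := fun {x} hx => by
    rw [hφdef]; simp only [indicator_of_notMem (notMem_Ioi.mpr hx), ofReal_zero]
  -- Step 1 : completed zeta in terms of M₁, M₂
  have key1 : completedRiemannZeta ρ = M₁ + M₂ - 1 / ρ - 1 / (1 - ρ) := by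
    set P := HurwitzZeta.hurwitzEvenFEPair 0 with hP
    have hPf : P.f = fun x : ℝ => ((HurwitzZeta.evenKernel 0 x : ℝ) : ℂ) := rfl
    have hPk : P.k = 1 / 2 := rfl
    have hPε : P.ε = 1 := rfl
    have hPf₀ : P.f₀ = 1 := by
      simp [hP, HurwitzZeta.hurwitzEvenFEPair]
    have hPg₀ : P.g₀ = 1 := rfl
    -- pointwise description of the modified kernel
    have hmod : ∀ x : ℝ, 0 < x →
        P.f_modif x = 2 * φ x + (x : ℂ) ^ (-(1/2) : ℂ) * (2 * φ x⁻¹) := by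
      intro x hx
      have hcast : ((x ^ (-(1/2) : ℝ) : ℝ) : ℂ) = (x : ℂ) ^ (-(1/2) : ℂ) := by
        rw [Complex.ofReal_cpow hx.le]; norm_num
      rw [WeakFEPair.f_modif, Pi.add_apply]
      rcases lt_trichotomy x 1 with hx1 | hx1 | hx1
      · rw [indicator_of_notMem (by simp [hx1.le] : x ∉ Ioi (1:ℝ)),
          indicator_of_mem (mem_Ioo.mpr ⟨hx, hx1⟩), hφ_nmem hx1.le, hPε, hPk, hPg₀]
        have hxinv : 1 < x⁻¹ := (one_lt_inv₀ hx).mpr hx1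
        rw [hφ_mem hxinv]
        have hreal : HurwitzZeta.evenKernel 0 x
            = x ^ (-(1/2) : ℝ) * (1 + 2 * psi x⁻¹) := by
          have hFE := HurwitzZeta.evenKernel_functional_equation 0 x
          rw [← HurwitzZeta.evenKernel_eq_cosKernel_of_zero] at hFE
          rw [hFE, evenKernel_zero_eq (by positivity : (0:ℝ) < 1/x), Real.rpow_neg hx.le]
          simp [one_div]
        have hPfx : P.f x = ((HurwitzZeta.evenKernel 0 x : ℝ) : ℂ) := rfl
        rw [hPfx, hreal]
        rw [← hcast]
        simp only [smul_eq_mul, mul_one]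
        push_cast
        ring
      · subst hx1
        rw [indicator_of_notMem (by simp : (1:ℝ) ∉ Ioi (1:ℝ)),
          indicator_of_notMem (by simp : (1:ℝ) ∉ Ioo (0:ℝ) 1), hφ_nmem le_rfl, inv_one,
          hφ_nmem le_rfl]
        simp
      · rw [indicator_of_mem (mem_Ioi.mpr hx1),
          indicator_of_notMem (by simp [hx1.le, not_lt] : x ∉ Ioo (0:ℝ) 1),
          hφ_mem hx1, hφ_nmem (x := x⁻¹) (by rw [inv_le_one₀ (lt_trans one_pos hx1)]; exact hx1.le),
          hPf₀]
        have hPfx : P.f x = ((HurwitzZeta.evenKernel 0 x : ℝ) : ℂ) := rfl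
        rw [hPfx, evenKernel_zero_eq (lt_trans one_pos hx1)]
        push_cast
        ring
    have hmc : MellinConvergent P.f_modif (ρ/2) := (P.isStrongFEPair_toStrongFEPair.hasMellin (ρ/2)).1
    have hU_int : IntegrableOn
        (fun x : ℝ => (x : ℂ) ^ (ρ/2 - 1) • (2 * φ x)) (Ioi 0) := by
      have h1 : (fun x : ℝ => (x : ℂ) ^ (ρ/2 - 1) • (2 * φ x)) =
          (Ioi 1).indicator (fun x : ℝ => (x : ℂ) ^ (ρ/2 - 1) • P.f_modif x) := by
        funext x
        rcases le_or_gt x 1 with hx | hx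
        · rw [indicator_of_notMem (notMem_Ioi.mpr hx), hφ_nmem hx]
          simp
        · rw [indicator_of_mem (mem_Ioi.mpr hx), hmod x (lt_trans one_pos hx),
            hφ_nmem (x := x⁻¹) (by rw [inv_le_one₀ (lt_trans one_pos hx)]; exact hx.le)]
          simp
      rw [h1]
      exact hmc.indicator measurableSet_Ioi
    have hsum : ∀ x ∈ Ioi (0:ℝ), (x : ℂ) ^ (ρ/2 - 1) • P.f_modif x =
        (x : ℂ) ^ (ρ/2 - 1) • (2 * φ x)
          + (x : ℂ) ^ (ρ/2 - 1) • ((x : ℂ) ^ (-(1/2) : ℂ) * (2 * φ x⁻¹)) := by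
      intro x hx
      rw [hmod x hx, smul_add]
    have hV_int : IntegrableOn
        (fun x : ℝ => (x : ℂ) ^ (ρ/2 - 1) • ((x : ℂ) ^ (-(1/2) : ℂ) * (2 * φ x⁻¹)))
        (Ioi 0) := by
      refine IntegrableOn.congr_fun (hmc.sub hU_int) (fun x hx => ?_) measurableSet_Ioi
      rw [Pi.sub_apply, hsum x hx]
      ring
    have hsplit : mellin P.f_modif (ρ/2) = 2 * M₁ + 2 * M₂ := by
      have e1 : mellin P.f_modif (ρ/2) =
          ∫ x in Ioi (0:ℝ), ((x : ℂ) ^ (ρ/2 - 1) • (2 * φ x)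
            + (x : ℂ) ^ (ρ/2 - 1) • ((x : ℂ) ^ (-(1/2) : ℂ) * (2 * φ x⁻¹))) :=
        setIntegral_congr_fun measurableSet_Ioi hsum
      rw [e1, integral_add hU_int hV_int]
      have eU : (∫ x in Ioi (0:ℝ), (x : ℂ) ^ (ρ/2 - 1) • (2 * φ x)) = 2 * M₁ := by
        have h2 := mellin_const_smul φ (ρ/2) (2 : ℂ)
        simpa only [mellin, smul_eq_mul, hM1] using h2
      have eV : (∫ x in Ioi (0:ℝ),
          (x : ℂ) ^ (ρ/2 - 1) • ((x : ℂ) ^ (-(1/2) : ℂ) * (2 * φ x⁻¹))) = 2 * M₂ := by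
        have h3 : (∫ x in Ioi (0:ℝ),
            (x : ℂ) ^ (ρ/2 - 1) • ((x : ℂ) ^ (-(1/2) : ℂ) * (2 * φ x⁻¹)))
            = mellin (fun t : ℝ => (t : ℂ) ^ (-(1/2) : ℂ) • ((fun u : ℝ => 2 * φ u) t⁻¹))
              (ρ/2) := by
          simp only [mellin, smul_eq_mul]
        rw [h3, mellin_cpow_smul, mellin_comp_inv (fun u : ℝ => 2 * φ u) (ρ/2 + -(1/2 : ℂ)),
          show -(ρ/2 + -(1/2 : ℂ)) = (1 - ρ)/2 by ring]
        have h4 := mellin_const_smul φ ((1 - ρ)/2) (2 : ℂ)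
        simpa only [smul_eq_mul] using h4
      rw [eU, eV]
    have hΛ : completedRiemannZeta ρ =
        (mellin P.f_modif (ρ/2) - (1/(ρ/2)) • P.f₀ - (P.ε/((P.k : ℂ) - ρ/2)) • P.g₀) / 2 := rfl
    rw [hΛ, hsplit, hPf₀, hPg₀, hPε, hPk, smul_eq_mul, smul_eq_mul, mul_one, mul_one]
    have h5 : ((1/2 : ℝ) : ℂ) - ρ/2 = (1 - ρ)/2 := by push_cast; ring
    rw [h5]
    rw [div_eq_iff (two_ne_zero (α := ℂ))]
    field_simp
  -- Step 4 : zeta zero iff completed zeta zero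
  have key4 : riemannZeta ρ = 0 ↔ completedRiemannZeta ρ = 0 := by
    rw [riemannZeta_def_of_ne_zero hρ0, div_eq_zero_iff]
    have : Complex.Gammaℝ ρ ≠ 0 := Complex.Gammaℝ_ne_zero_of_re_pos (by rw [hρre]; norm_num)
    tauto
  -- Step 5 : arithmetic conclusion
  have habs : (‖ρ‖ : ℝ) ≠ 0 := fun h => hρ0 (norm_eq_zero.mp h)
  have hc : 1 / ρ + 1 / (1 - ρ) = (((‖ρ‖ ^ 2)⁻¹ : ℝ) : ℂ) := by
    rw [div_add_div _ _ hρ0 hρ1, one_mul, mul_one, sub_add_cancel, ← hconjρ,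
      Complex.mul_conj, ← Complex.sq_norm]
    push_cast
    rw [one_div]
  have hM1c : M₁ = (starRingEnd ℂ) M₂ := by
    rw [key2, Complex.conj_conj]
  have hTre : (∫ t in Ioo (0 : ℝ) 1, (t : ℂ) ^ (ρ - 2) * (psi (1 / t ^ 2) : ℝ)).re
      = 2⁻¹ * M₂.re := by
    rw [key3, show M₂ / 2 = (2⁻¹ : ℝ) • M₂ by rw [Complex.real_smul]; push_cast; ring,
      Complex.smul_re, smul_eq_mul]
  rw [key4, key1, hM1c, hTre]
  have hkey : (starRingEnd ℂ) M₂ + M₂ - 1 / ρ - 1 / (1 - ρ)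
      = ((2 * M₂.re - (‖ρ‖ ^ 2)⁻¹ : ℝ) : ℂ) := by
    rw [sub_sub, hc, add_comm ((starRingEnd ℂ) M₂) M₂, Complex.add_conj]
    push_cast
    ring
  rw [hkey, Complex.ofReal_eq_zero]
  constructor <;> intro h
  · field_simp at h ⊢
    linarith
  · field_simp at h ⊢
    linarith
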